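/- Any Clifford algebraic curvature tensor is totally Jacobi-dual. That is, if R = μ₀R⁰ + Σ_{i=1}^m μᵢR^{Jᵢ} on a scalar product space (V,g) where J₁,…,J_m are g-skew-adjoint, pairwise anti-commuting, and satisfy Jᵢ² = −id for all i, then for all X, Y ∈ V with X ≠ 0, if Y is an eigenvector of 𝒥_X then X is an eigenvector of 𝒥_Y. -/

import Mathlib

open Module Finset

/-- The algebraic curvature tensor `R⁰` of constant sectional curvature one. -/
def R0 {V : Type*} [AddCommGroup V] [Module ℝ V] (g : LinearMap.BilinForm ℝ V)
    (X Y Z W : V) : ℝ :=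
  g Y Z * g X W - g X Z * g Y W

/-- The algebraic curvature tensor `R^J` generated by a `g`-skew-adjoint endomorphism `J`. -/
def RJ {V : Type*} [AddCommGroup V] [Module ℝ V] (g : LinearMap.BilinForm ℝ V)
    (J : V →ₗ[ℝ] V) (X Y Z W : V) : ℝ :=
  g (J X) Z * g (J Y) W - g (J Y) Z * g (J X) W + 2 * g (J X) Y * g (J Z) W
/-- any Clifford algebraic curvature tensor (`JᵢJⱼ + JⱼJᵢ = −2δᵢⱼ id`)
is totally Jacobi-dual. -/
theorem clifford_totally_jacobiDual
    {V : Type*} [AddCommGroup V] [Module ℝ V] [FiniteDimensional ℝ V]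
    (g : LinearMap.BilinForm ℝ V) (hsymm : ∀ x y, g x y = g y x) (hnd : g.Nondegenerate)
    {m : ℕ} (μ₀ : ℝ) (μ : Fin m → ℝ) (J : Fin m → V →ₗ[ℝ] V)
    (hskew : ∀ i, ∀ x y : V, g (J i x) y = - g x (J i y))
    (hhur : ∀ i j, J i ∘ₗ J j + J j ∘ₗ J i
      = ((if i = j then -2 else 0 : ℝ) • LinearMap.id : V →ₗ[ℝ] V))
    (R : V → V → V → V → ℝ)
    (hR : ∀ X Y Z W, R X Y Z W = μ₀ * R0 g X Y Z W + ∑ i, μ i * RJ g (J i) X Y Z W)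
    (Jac : V → V →ₗ[ℝ] V)
    (hJac : ∀ X Y Z, g (Jac X Y) Z = R Y X X Z) :
    ∀ X Y : V, X ≠ 0 →
      (∃ lam : ℝ, Module.End.HasEigenvector (Jac X) lam Y) →
      ∃ lam : ℝ, Module.End.HasEigenvector (Jac Y) lam X := by
  -- basic consequences of skew-adjointness and symmetry
  have h0 : ∀ (i : Fin m) (x : V), g (J i x) x = 0 := by
    intro i x
    have h1 := hskew i x x
    have h2 := hsymm x (J i x)
    linarith
  have hJYX : ∀ (i : Fin m) (x y : V), g (J i y) x = - g (J i x) y := by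
    intro i x y
    have h1 := hskew i y x
    have h2 := hsymm y (J i x)
    linarith
  -- explicit formula for the Jacobi operator
  have hform : ∀ X Y : V, Jac X Y
      = (μ₀ * g X X) • Y - (μ₀ * g X Y) • X
        - ∑ i, (3 * (μ i * g (J i X) Y)) • (J i X) := by
    intro X Y
    have key : ∀ Z, g (Jac X Y
        - ((μ₀ * g X X) • Y - (μ₀ * g X Y) • X
          - ∑ i, (3 * (μ i * g (J i X) Y)) • (J i X))) Z = 0 := by
      intro Z
      have h1 := hJac X Y Z
      have hsum : ∑ i, μ i * RJ g (J i) Y X X Z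
          = ∑ i, -(3 * (μ i * g (J i X) Y)) * g (J i X) Z := by
        refine Finset.sum_congr rfl fun i _ => ?_
        simp only [RJ]
        rw [h0 i X, hJYX i X Y]
        ring
      simp only [map_sub, map_add, map_smul, map_sum, LinearMap.sub_apply,
        LinearMap.add_apply, LinearMap.smul_apply, LinearMap.sum_apply, smul_eq_mul]
      rw [h1, hR, hsum, R0, hsymm Y X]
      ring_nf
      rw [← Finset.sum_add_distrib]
      refine Finset.sum_eq_zero fun i _ => by ring
    have := hnd.1 _ key
    exact sub_eq_zero.mp this
  intro X Y hX ⟨lam, hev⟩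
  have hY0 : Y ≠ 0 := hev.2
  have heq : Jac X Y = lam • Y := hev.apply_eq_smul
  set c : Fin m → ℝ := fun i => μ i * g (J i X) Y with hc
  set W : V →ₗ[ℝ] V := ∑ i, c i • J i with hWdef
  have hWapp : ∀ x : V, W x = ∑ i, c i • J i x := by
    intro x
    simp [hWdef, LinearMap.sum_apply]
  set s : ℝ := ∑ i, (c i)^2 with hs
  set b : ℝ := μ₀ * g X Y with hb
  set d : ℝ := μ₀ * g X X - lam with hd'
  -- W ∘ W = -s • id
  have hWW : ∀ x : V, W (W x) = (-s) • x := by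
    intro x
    have hexp : W (W x) = ∑ i, ∑ j, (c i * c j) • J i (J j x) := by
      simp only [hWapp, map_sum, map_smul, Finset.smul_sum, smul_smul]
    have h2 : (2:ℝ) • W (W x) = (2:ℝ) • ((-s) • x) := by
      rw [hexp, two_smul]
      have hswap : ∑ i, ∑ j, (c i * c j) • J i (J j x)
          = ∑ i, ∑ j, (c i * c j) • J j (J i x) := by
        rw [Finset.sum_comm]
        exact Finset.sum_congr rfl fun i _ => Finset.sum_congr rfl fun j _ => by
          rw [mul_comm]
      calc (∑ i, ∑ j, (c i * c j) • J i (J j x)) + ∑ i, ∑ j, (c i * c j) • J i (J j x)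
          = ∑ i, ∑ j, (c i * c j) • (J i (J j x) + J j (J i x)) := by
            nth_rewrite 2 [hswap]
            rw [← Finset.sum_add_distrib]
            refine Finset.sum_congr rfl fun i _ => ?_
            rw [← Finset.sum_add_distrib]
            refine Finset.sum_congr rfl fun j _ => ?_
            rw [smul_add]
        _ = ∑ i, ∑ j, (c i * c j) • ((if i = j then (-2:ℝ) else 0) • x) := by
            refine Finset.sum_congr rfl fun i _ => Finset.sum_congr rfl fun j _ => ?_
            have := congrArg (fun (f : V →ₗ[ℝ] V) => f x) (hhur i j)
            simp only [LinearMap.add_apply, LinearMap.comp_apply, LinearMap.smul_apply,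
              LinearMap.id_apply] at this
            rw [this]
        _ = ∑ i, ((c i * c i) * (-2)) • x := by
            refine Finset.sum_congr rfl fun i _ => ?_
            rw [Finset.sum_eq_single i]
            · simp [smul_smul]
            · intro j _ hj
              simp [Ne.symm hj]
            · intro h; exact absurd (Finset.mem_univ i) h
        _ = (2:ℝ) • ((-s) • x) := by
            rw [← Finset.sum_smul, smul_smul, hs]
            congr 1
            have hterm : ∀ i : Fin m, c i * c i * (-2) = -2 * (c i)^2 := fun i => by ring
            rw [Finset.sum_congr rfl fun i _ => hterm i, ← Finset.mul_sum]
            ring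
    exact smul_right_injective V (by norm_num : (2:ℝ) ≠ 0) h2
  -- the eigenvalue equation in vector form
  have hS : ∀ Z : V, ∑ i, (3 * (μ i * g (J i X) Y)) • (J i Z) = (3:ℝ) • W Z := by
    intro Z
    rw [hWapp, Finset.smul_sum]
    exact Finset.sum_congr rfl fun i _ => by rw [smul_smul, hc]
  have hdY : d • Y = b • X + (3:ℝ) • W X := by
    have h1 := hform X Y
    rw [heq, hS X] at h1
    rw [hd', sub_smul, h1]
    abel
  -- formula for Jac Y X
  have hformYX : Jac Y X = (μ₀ * g Y Y) • X - b • Y + (3:ℝ) • W Y := by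
    rw [hform Y X, hsymm Y X, ← hb]
    have hS2 : ∑ i, (3 * (μ i * g (J i Y) X)) • (J i Y) = -((3:ℝ) • W Y) := by
      rw [hWapp, Finset.smul_sum, ← Finset.sum_neg_distrib]
      refine Finset.sum_congr rfl fun i _ => ?_
      rw [hJYX i X Y]
      have hcoe : (3 * (μ i * -(g (J i X) Y))) = -(3 * c i) := by rw [hc]; ring
      rw [hcoe, neg_smul, smul_smul]
    rw [hS2, sub_neg_eq_add]
  by_cases hd0 : d = 0
  · -- degenerate case: forces b = 0 and W = 0
    rw [hd0, zero_smul] at hdY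
    have h9 : (3:ℝ) • W X = (-b) • X := by
      calc (3:ℝ) • W X = (b • X + (3:ℝ) • W X) - b • X := by abel
        _ = 0 - b • X := by rw [← hdY]
        _ = (-b) • X := by rw [zero_sub, neg_smul]
    have h10 : (3:ℝ) • W (W X) = (-b) • W X := by
      have h := congrArg W h9
      rw [map_smul, map_smul] at h
      exact h
    have h11 : (b * b + 9 * s) • X = (0:V) := by
      have h12 : (9:ℝ) • W (W X) = (b*b) • X := by
        calc (9:ℝ) • W (W X) = (3:ℝ) • ((3:ℝ) • W (W X)) := by
              rw [smul_smul]; norm_num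
          _ = (3:ℝ) • ((-b) • W X) := by rw [h10]
          _ = (-b) • ((3:ℝ) • W X) := by rw [smul_comm]
          _ = (-b) • ((-b) • X) := by rw [h9]
          _ = (b*b) • X := by rw [smul_smul]; ring_nf
      rw [hWW X, smul_smul] at h12
      have : (b * b + 9 * s) • X = (b*b) • X - (9 * -s) • X := by
        rw [← sub_smul]; congr 1; ring
      rw [this, ← h12, sub_self]
    have hcoef : b * b + 9 * s = 0 := by
      rcases smul_eq_zero.mp h11 with h | h
      · exact h
      · exact absurd h hX
    have hsnn : 0 ≤ s := by
      rw [hs]; exact Finset.sum_nonneg fun i _ => sq_nonneg _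
    have hs0 : s = 0 := by nlinarith [mul_self_nonneg b]
    have hb0 : b = 0 := by
      have : b * b = 0 := by linarith
      exact mul_self_eq_zero.mp this
    have hci : ∀ i, c i = 0 := by
      intro i
      have hsum0 : ∑ i, (c i)^2 = 0 := by rw [← hs, hs0]
      have := (Finset.sum_eq_zero_iff_of_nonneg fun i _ => sq_nonneg (c i)).mp hsum0
        i (Finset.mem_univ i)
      exact pow_eq_zero_iff (by norm_num) |>.mp this
    have hWzero : ∀ x : V, W x = 0 := by
      intro x
      rw [hWapp]
      exact Finset.sum_eq_zero fun i _ => by rw [hci i, zero_smul]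
    exact ⟨μ₀ * g Y Y, Module.End.hasEigenvector_iff.mpr
      ⟨Module.End.mem_eigenspace_iff.mpr (by rw [hformYX, hb0, hWzero Y]; simp), hX⟩⟩
  · -- generic case
    have hY : Y = d⁻¹ • (b • X + (3:ℝ) • W X) := by
      rw [← hdY, smul_smul, inv_mul_cancel₀ hd0, one_smul]
    refine ⟨μ₀ * g Y Y - d⁻¹ * (b*b) - d⁻¹ * (9*s), Module.End.hasEigenvector_iff.mpr
      ⟨Module.End.mem_eigenspace_iff.mpr ?_, hX⟩⟩
    have hWY : W Y = d⁻¹ • (b • W X + (-(3*s)) • X) := by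
      rw [hY, map_smul, map_add, map_smul, map_smul, hWW X]
      match_scalars <;> ring
    rw [hformYX, hWY]
    set eY : ℝ := g Y Y with heY
    rw [hY]
    match_scalars <;> ring
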